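/- Let g : ℂ → ℂ be an entire function satisfying g(z+1) = g(z) for all z ∈ ℂ. Suppose there exist ν ∈ ℂ with Im ν > 0 and μ ∈ ℂ such that g(z+ν) = g(z) + μ for all z ∈ ℂ. Then g is constant and μ = 0. -/
import Mathlib


open Complex

open Set Function

/-- If an entire function `g` satisfies `g (z + 1) = g z` for all `z` and
`g (z + ν) = g z + μ` for some `ν` with positive imaginary part, then `g` is
constant and `μ = 0`. -/
theorem stmt_0 (g : ℂ → ℂ) (hg : Differentiable ℂ g)
    (hper : ∀ z : ℂ, g (z + 1) = g z)
    (ν μ : ℂ) (hν : 0 < ν.im)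
    (hqp : ∀ z : ℂ, g (z + ν) = g z + μ) :
    (∀ z w : ℂ, g z = g w) ∧ μ = 0 := by
  set f := deriv g with hfdef
  have hfd : Differentiable ℂ f := by
    have := (analyticOnNhd_univ_iff_differentiable.2 hg).deriv
    exact fun z => (this z trivial).differentiableAt
  have hf1 : Periodic f 1 := by
    intro z
    calc f (z + 1) = deriv (fun w => g (w + 1)) z := (deriv_comp_add_const g 1 z).symm
    _ = f z := by rw [funext hper]
  have hfν : Periodic f ν := by
    intro z
    calc f (z + ν) = deriv (fun w => g (w + ν)) z := (deriv_comp_add_const g ν z).symm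
    _ = deriv (fun w => g w + μ) z := by simp only [hqp]
    _ = f z := deriv_add_const μ
  -- every value of f is attained on the compact fundamental parallelogram
  set K : Set ℂ := (fun p : ℝ × ℝ => (p.1 : ℂ) + (p.2 : ℂ) * ν) '' (Icc 0 1 ×ˢ Icc 0 1) with hK
  have hKc : IsCompact K :=
    (isCompact_Icc.prod isCompact_Icc).image (by continuity)
  have hsub : range f ⊆ f '' K := by
    rintro - ⟨z, rfl⟩
    set b : ℝ := z.im / ν.im with hb
    set a : ℝ := z.re - b * ν.re with ha
    have hz : z = (a : ℂ) + (b : ℂ) * ν := by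
      apply Complex.ext
      · simp [ha, hb, Complex.add_re, Complex.mul_re]
      · simp [ha, hb, Complex.add_im, Complex.mul_im]
        field_simp
    set w : ℂ := ((Int.fract a : ℝ) : ℂ) + ((Int.fract b : ℝ) : ℂ) * ν with hw
    have hzw : z = w + (⌊b⌋ : ℤ) • ν + (⌊a⌋ : ℤ) • (1 : ℂ) := by
      rw [hz, hw]
      simp only [Int.fract, zsmul_eq_mul, smul_eq_mul]
      push_cast
      ring
    have hfz : f z = f w := by
      rw [hzw, (hf1.zsmul ⌊a⌋) _, (hfν.zsmul ⌊b⌋) _]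
    exact ⟨w, ⟨(Int.fract a, Int.fract b), ⟨⟨(Int.fract_nonneg a), (Int.fract_lt_one a).le⟩,
      ⟨(Int.fract_nonneg b), (Int.fract_lt_one b).le⟩⟩, hw.symm⟩, hfz.symm⟩
  have hb : Bornology.IsBounded (range f) :=
    ((hKc.image hfd.continuous).isBounded).subset hsub
  have hconst : ∀ z, f z = f 0 := fun z => hfd.apply_eq_apply_of_bounded hb z 0
  set c : ℂ := f 0 with hc
  have hlin : ∀ z : ℂ, g z = c * z + g 0 := by
    intro z
    have hG : Differentiable ℂ (fun z => g z - c * z) :=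
      hg.sub (differentiable_id.const_mul c)
    have hG' : ∀ x : ℂ, deriv (fun z => g z - c * z) x = 0 := by
      intro x
      have h1 : HasDerivAt (fun z : ℂ => g z - c * z) (f x - c * 1) x :=
        (hg x).hasDerivAt.sub ((hasDerivAt_id x).const_mul c)
      rw [h1.deriv, hconst x]; ring
    have := is_const_of_deriv_eq_zero hG hG' z 0
    simp only [mul_zero, sub_zero] at this
    linear_combination this
  have hc0 : c = 0 := by
    have h := hper 0
    rw [hlin (0+1), hlin 0] at h
    linear_combination h
  have hgc : ∀ z : ℂ, g z = g 0 := by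
    intro z; rw [hlin z, hc0]; ring
  constructor
  · intro z w; rw [hgc z, hgc w]
  · have h := hqp 0
    rw [hgc (0 + ν)] at h
    linear_combination -h
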